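/- For all natural numbers d, g and every nonzero real (or rational) number N, the coefficient of q^d in the formal power series (1+q)^{d−g} · (1 + ((N−1)/N)·q)^g equals the partial sum Σ_{i=0}^{d} C(g, i) · (−N)^{−i}. Equivalently, this coefficient equals the coefficient of q^d in (1 − q/N)^g · (1 − q)^{−1}. -/

import Mathlib

open PowerSeries Finset

/-- Generalized binomial coefficient C(z, k) for an integer z, as a rational number. -/
noncomputable def genChoose (z : ℤ) (k : ℕ) : ℚ :=
  (∏ i ∈ Finset.range k, ((z : ℚ) - (i : ℚ))) / (k.factorial : ℚ)

lemma descPoch_smeval (r : ℚ) (k : ℕ) :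
    (descPochhammer ℤ k).smeval r = ∏ i ∈ Finset.range k, (r - (i : ℚ)) := by
  induction k with
  | zero => simp [descPochhammer_zero]
  | succ n ih =>
      rw [descPochhammer_succ_right, Polynomial.smeval_mul, ih, Finset.prod_range_succ]
      congr 1
      rw [Polynomial.smeval_sub, Polynomial.smeval_X, Polynomial.smeval_natCast]
      simp

lemma ringChoose_eq (r : ℚ) (k : ℕ) :
    Ring.choose r k = (∏ i ∈ Finset.range k, (r - (i : ℚ))) / (k.factorial : ℚ) := by
  have h := Ring.descPochhammer_eq_factorial_smul_choose r k
  rw [descPoch_smeval] at h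
  rw [h, nsmul_eq_mul]
  field_simp

lemma genChoose_eq (z : ℤ) (k : ℕ) : genChoose z k = Ring.choose (z : ℚ) k := by
  rw [ringChoose_eq, genChoose]

/-- The formal binomial series (1+X)^r for r : ℚ. -/
noncomputable def binSer (r : ℚ) : PowerSeries ℚ := PowerSeries.mk (Ring.choose r)

lemma coeff_binSer (r : ℚ) (k : ℕ) : PowerSeries.coeff (R := ℚ) k (binSer r) = Ring.choose r k := by
  simp [binSer]

lemma binSer_mul (r s : ℚ) : binSer r * binSer s = binSer (r + s) := by
  ext n
  rw [PowerSeries.coeff_mul, coeff_binSer, Ring.add_choose_eq n (Commute.all r s)]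
  exact Finset.sum_congr rfl (fun _ _ => by simp [coeff_binSer])

lemma binSer_zero : binSer 0 = 1 := by
  ext n
  rw [coeff_binSer]
  cases n with
  | zero => simp [Ring.choose_zero_right]
  | succ m => rw [Ring.choose_zero_succ]; simp [PowerSeries.coeff_one]

lemma binSer_one : binSer 1 = 1 + PowerSeries.X := by
  ext n
  rw [coeff_binSer, show (1:ℚ) = ((1:ℕ):ℚ) by norm_num, Ring.choose_natCast]
  rcases n with _ | _ | m <;>
    simp [Nat.choose, PowerSeries.coeff_one, PowerSeries.coeff_X, Nat.choose_eq_zero_of_lt]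

lemma binSer_nat (n : ℕ) : binSer (n : ℚ) = (1 + PowerSeries.X) ^ n := by
  induction n with
  | zero => simpa using binSer_zero
  | succ m ih =>
      rw [pow_succ, ← ih, ← binSer_one, binSer_mul]
      norm_num

lemma binSer_neg_nat (k : ℕ) : binSer (-1) ^ k = binSer (-(k : ℚ)) := by
  induction k with
  | zero => simpa using binSer_zero.symm
  | succ m ih =>
      rw [pow_succ, ih, binSer_mul]
      push_cast
      ring_nf

lemma one_add_X_mul_binSer_neg_one : (1 + PowerSeries.X) * binSer (-1) = 1 := by
  rw [← binSer_one, binSer_mul]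
  norm_num [binSer_zero]

/-- The common value of the two coefficient computations. -/
lemma key_sum (d g : ℕ) (x : ℚ) :
    ∑ k ∈ Finset.range (g + 1), (g.choose k : ℚ) * x ^ k * (if k ≤ d then 1 else 0) =
      ∑ i ∈ Finset.range (d + 1), (g.choose i : ℚ) * x ^ i := by
  set M := max d g with hM
  have h1 : ∑ k ∈ Finset.range (g + 1), (g.choose k : ℚ) * x ^ k * (if k ≤ d then 1 else 0)
      = ∑ k ∈ Finset.range (M + 1), (g.choose k : ℚ) * x ^ k * (if k ≤ d then 1 else 0) := by
    apply Finset.sum_subset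
    · exact Finset.range_subset_range.2 (by omega)
    · intro k hk hk'
      simp only [Finset.mem_range] at hk hk'
      have : g < k := by omega
      simp [Nat.choose_eq_zero_of_lt this]
  have h2 : ∑ i ∈ Finset.range (d + 1), (g.choose i : ℚ) * x ^ i
      = ∑ k ∈ Finset.range (M + 1), (g.choose k : ℚ) * x ^ k * (if k ≤ d then 1 else 0) := by
    symm
    rw [← Finset.sum_subset (Finset.range_subset_range.2 (show d + 1 ≤ M + 1 by omega))
      (fun k hk hk' => by
        simp only [Finset.mem_range] at hk hk'
        have : ¬ k ≤ d := by omega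
        simp [this])]
    refine Finset.sum_congr rfl (fun k hk => ?_)
    simp only [Finset.mem_range] at hk
    have : k ≤ d := by omega
    simp [this]
  rw [h1, h2]

lemma coeff_term (d k : ℕ) (hk : k ≤ d) :
    PowerSeries.coeff (R := ℚ) d (PowerSeries.X ^ k * binSer ((d : ℚ) - (k : ℚ))) = 1 := by
  rw [PowerSeries.coeff_X_pow_mul', if_pos hk, coeff_binSer,
    show (d : ℚ) - (k : ℚ) = ((d - k : ℕ) : ℚ) by push_cast [Nat.cast_sub hk]; ring,
    Ring.choose_natCast, Nat.choose_self, Nat.cast_one]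

theorem stmt_4 (d g : ℕ) (N : ℚ) (hN : N ≠ 0) :
    (PowerSeries.coeff (R := ℚ) d
        (PowerSeries.mk (fun k => genChoose ((d : ℤ) - (g : ℤ)) k) *
          (1 + PowerSeries.C (R := ℚ) ((N - 1) / N) * PowerSeries.X) ^ g) =
      ∑ i ∈ Finset.range (d + 1), (g.choose i : ℚ) * ((-N)⁻¹) ^ i) ∧
    (PowerSeries.coeff (R := ℚ) d
        (PowerSeries.mk (fun k => genChoose ((d : ℤ) - (g : ℤ)) k) *
          (1 + PowerSeries.C (R := ℚ) ((N - 1) / N) * PowerSeries.X) ^ g) =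
      PowerSeries.coeff (R := ℚ) d
        ((1 - PowerSeries.C (R := ℚ) N⁻¹ * PowerSeries.X) ^ g *
          PowerSeries.mk (fun _ => (1 : ℚ)))) := by
  -- the series on the left is the binomial series
  have hmk : PowerSeries.mk (fun k => genChoose ((d : ℤ) - (g : ℤ)) k)
      = binSer ((d : ℚ) - (g : ℚ)) := by
    ext n
    rw [PowerSeries.coeff_mk, coeff_binSer, genChoose_eq]
    push_cast
    ring_nf
  -- factor 1 + ((N-1)/N) X
  have hfac : (1 + PowerSeries.C (R := ℚ) ((N - 1) / N) * PowerSeries.X)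
      = (1 + PowerSeries.X) * (1 - PowerSeries.C (R := ℚ) N⁻¹ * PowerSeries.X * binSer (-1)) := by
    have h1 : ((N - 1) / N : ℚ) = 1 - N⁻¹ := by field_simp
    have h2 : (1 + PowerSeries.X) *
        (1 - PowerSeries.C (R := ℚ) N⁻¹ * PowerSeries.X * binSer (-1))
        = 1 + PowerSeries.X - PowerSeries.C (R := ℚ) N⁻¹ * PowerSeries.X := by
      rw [mul_sub, mul_one,
        show (1 + PowerSeries.X) * (PowerSeries.C (R := ℚ) N⁻¹ * PowerSeries.X * binSer (-1))
          = PowerSeries.C (R := ℚ) N⁻¹ * PowerSeries.X * ((1 + PowerSeries.X) * binSer (-1)) by ring,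
        one_add_X_mul_binSer_neg_one, mul_one]
    rw [h2, h1, map_sub, map_one]
    ring
  -- rewrite the whole series
  have hser : PowerSeries.mk (fun k => genChoose ((d : ℤ) - (g : ℤ)) k) *
        (1 + PowerSeries.C (R := ℚ) ((N - 1) / N) * PowerSeries.X) ^ g
      = ∑ k ∈ Finset.range (g + 1),
          PowerSeries.C (R := ℚ) ((g.choose k : ℚ) * (-N⁻¹) ^ k) *
            (PowerSeries.X ^ k * binSer ((d : ℚ) - (k : ℚ))) := by
    rw [hmk, hfac, mul_pow, show binSer ((d : ℚ) - (g : ℚ)) *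
        ((1 + PowerSeries.X) ^ g * (1 - PowerSeries.C (R := ℚ) N⁻¹ * PowerSeries.X * binSer (-1)) ^ g)
        = (binSer ((d : ℚ) - (g : ℚ)) * binSer ((g : ℚ))) *
          (1 - PowerSeries.C (R := ℚ) N⁻¹ * PowerSeries.X * binSer (-1)) ^ g by
        rw [binSer_nat]; ring,
      binSer_mul, sub_add_cancel, sub_eq_add_neg,
      show (1 : ℚ⟦X⟧) + -(PowerSeries.C (R := ℚ) N⁻¹ * PowerSeries.X * binSer (-1))
        = -(PowerSeries.C (R := ℚ) N⁻¹ * PowerSeries.X * binSer (-1)) + 1 by ring,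
      add_pow, Finset.mul_sum]
    refine Finset.sum_congr rfl (fun k hk => ?_)
    have hneg : -(PowerSeries.C (R := ℚ) N⁻¹ * PowerSeries.X * binSer (-1))
        = PowerSeries.C (R := ℚ) (-N⁻¹) * PowerSeries.X * binSer (-1) := by
      rw [map_neg]; ring
    rw [hneg, one_pow, mul_one, mul_pow, mul_pow, ← map_pow, binSer_neg_nat,
      show ((g.choose k : ℕ) : ℚ⟦X⟧) = PowerSeries.C (R := ℚ) ((g.choose k : ℕ) : ℚ) from
        (map_natCast (PowerSeries.C (R := ℚ)) _),
      show binSer ((d : ℚ) - (k : ℚ)) = binSer (-(k : ℚ)) * binSer ((d : ℚ)) by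
        rw [binSer_mul]; ring_nf,
      map_mul]
    ring
  have key1 : PowerSeries.coeff (R := ℚ) d
      (PowerSeries.mk (fun k => genChoose ((d : ℤ) - (g : ℤ)) k) *
        (1 + PowerSeries.C (R := ℚ) ((N - 1) / N) * PowerSeries.X) ^ g)
      = ∑ k ∈ Finset.range (g + 1),
          (g.choose k : ℚ) * (-N⁻¹) ^ k * (if k ≤ d then 1 else 0) := by
    rw [hser, map_sum]
    refine Finset.sum_congr rfl (fun k hk => ?_)
    rw [PowerSeries.coeff_C_mul]
    by_cases h : k ≤ d
    · rw [coeff_term d k h, if_pos h]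
    · simp [PowerSeries.coeff_X_pow_mul', h]
  have key2 : PowerSeries.coeff (R := ℚ) d
      ((1 - PowerSeries.C (R := ℚ) N⁻¹ * PowerSeries.X) ^ g *
        PowerSeries.mk (fun _ => (1 : ℚ)))
      = ∑ k ∈ Finset.range (g + 1),
          (g.choose k : ℚ) * (-N⁻¹) ^ k * (if k ≤ d then 1 else 0) := by
    rw [sub_eq_add_neg, show (1 : ℚ⟦X⟧) + -(PowerSeries.C (R := ℚ) N⁻¹ * PowerSeries.X)
        = -(PowerSeries.C (R := ℚ) N⁻¹ * PowerSeries.X) + 1 by ring, add_pow, Finset.sum_mul, map_sum]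
    refine Finset.sum_congr rfl (fun k hk => ?_)
    have hneg : -(PowerSeries.C (R := ℚ) N⁻¹ * PowerSeries.X)
        = PowerSeries.C (R := ℚ) (-N⁻¹) * PowerSeries.X := by rw [map_neg]; ring
    rw [hneg, one_pow, mul_one, mul_pow, ← map_pow,
      show ((g.choose k : ℕ) : ℚ⟦X⟧) = PowerSeries.C (R := ℚ) ((g.choose k : ℕ) : ℚ) from
        (map_natCast (PowerSeries.C (R := ℚ)) _),
      show PowerSeries.C (R := ℚ) ((-N⁻¹) ^ k) * PowerSeries.X ^ k *
            PowerSeries.C (R := ℚ) ((g.choose k : ℕ) : ℚ) * PowerSeries.mk (fun _ => (1 : ℚ))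
          = PowerSeries.C (R := ℚ) ((g.choose k : ℚ)) * PowerSeries.C (R := ℚ) ((-N⁻¹) ^ k) *
            (PowerSeries.X ^ k * PowerSeries.mk (fun _ => (1 : ℚ))) by ring,
      ← map_mul, PowerSeries.coeff_C_mul, PowerSeries.coeff_X_pow_mul']
    by_cases h : k ≤ d
    · rw [if_pos h, if_pos h, PowerSeries.coeff_mk]
    · simp [h]
  have hx : ((-N)⁻¹ : ℚ) = -N⁻¹ := by rw [inv_neg]
  constructor
  · rw [key1, key_sum d g (-N⁻¹), hx]
  · rw [key1, key2]
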